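/- If X is an uncountable discrete space and X* = X ∪ {∞} is its one-point compactification, then X* has the Rothberger property, but the point ∞ is not a Gδ point of X*. -/

import Mathlib

open Set

/-- `𝒰` is an open cover of the space `X`. -/
def IsOpenCover {X : Type*} [TopologicalSpace X] (𝒰 : Set (Set X)) : Prop :=
  (∀ U ∈ 𝒰, IsOpen U) ∧ ⋃₀ 𝒰 = Set.univ

/-- The Rothberger property `S₁^ω(𝒪,𝒪)`. -/
def RothbergerSpace (X : Type*) [TopologicalSpace X] : Prop :=
  ∀ 𝒰 : ℕ → Set (Set X), (∀ n, IsOpenCover (𝒰 n)) →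
    ∃ U : ℕ → Set X, (∀ n, U n ∈ 𝒰 n) ∧ (⋃ n, U n) = Set.univ

theorem stmt17 (X : Type*) [TopologicalSpace X] [DiscreteTopology X] [Uncountable X] :
    RothbergerSpace (OnePoint X) ∧
      ¬ ∃ U : ℕ → Set (OnePoint X), (∀ n, IsOpen (U n)) ∧
          (⋂ n, U n) = {OnePoint.infty} := by
  -- key fact: an open set containing ∞ misses only finitely many points of X
  have key : ∀ s : Set (OnePoint X), IsOpen s → OnePoint.infty ∈ s →
      (((↑) ⁻¹' s : Set X)ᶜ).Finite := by
    intro s hs hmem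
    exact ((OnePoint.isOpen_iff_of_mem hmem).mp hs).2.finite_of_discrete
  constructor
  · intro 𝒰 h𝒰
    -- pick, for each n and point p, a member of 𝒰 n containing p
    have choice : ∀ n (p : OnePoint X), ∃ V, V ∈ 𝒰 n ∧ p ∈ V := by
      intro n p
      have : p ∈ ⋃₀ 𝒰 n := by rw [(h𝒰 n).2]; trivial
      obtain ⟨V, hV, hp⟩ := this
      exact ⟨V, hV, hp⟩
    choose g hg1 hg2 using choice
    -- first set: containing ∞
    set U0 := g 0 OnePoint.infty with hU0
    have hC : (((↑) ⁻¹' U0 : Set X)ᶜ).Finite :=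
      key U0 ((h𝒰 0).1 _ (hg1 0 _)) (hg2 0 _)
    -- enumerate the (countable, nonempty) set of missed points together with ∞
    have hScount : (((↑) '' (((↑) ⁻¹' U0 : Set X)ᶜ) ∪ {OnePoint.infty}) : Set (OnePoint X)).Countable :=
      (hC.image _).countable.union (countable_singleton _)
    have hSne : (((↑) '' (((↑) ⁻¹' U0 : Set X)ᶜ) ∪ {OnePoint.infty}) : Set (OnePoint X)).Nonempty :=
      ⟨OnePoint.infty, Or.inr rfl⟩
    obtain ⟨f, hf⟩ := hScount.exists_eq_range hSne
    refine ⟨fun n => Nat.rec U0 (fun m _ => g (m+1) (f m)) n, fun n => ?_, ?_⟩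
    · cases n with
      | zero => exact hg1 0 _
      | succ m => exact hg1 (m+1) _
    · ext p
      simp only [mem_iUnion, mem_univ, iff_true]
      by_cases hp : p ∈ U0
      · exact ⟨0, hp⟩
      · have hpS : p ∈ (((↑) '' (((↑) ⁻¹' U0 : Set X)ᶜ) ∪ {OnePoint.infty}) : Set (OnePoint X)) := by
          cases p with
          | infty => exact Or.inr rfl
          | coe x => exact Or.inl ⟨x, hp, rfl⟩
        rw [hf] at hpS
        obtain ⟨m, hm⟩ := hpS
        exact ⟨m + 1, hm ▸ hg2 (m+1) (f m)⟩
  · rintro ⟨U, hopen, hinter⟩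
    have hmem : ∀ n, OnePoint.infty ∈ U n := by
      intro n
      have : OnePoint.infty ∈ ⋂ n, U n := by rw [hinter]; rfl
      exact mem_iInter.mp this n
    have hcount : (⋃ n, (((↑) ⁻¹' (U n) : Set X)ᶜ)).Countable :=
      countable_iUnion fun n => (key _ (hopen n) (hmem n)).countable
    have hne : (⋃ n, (((↑) ⁻¹' (U n) : Set X)ᶜ)) ≠ univ := fun h =>
      Set.not_countable_univ (h ▸ hcount)
    obtain ⟨x, hx⟩ := (ne_univ_iff_exists_notMem _).mp hne
    have hxU : ∀ n, (x : OnePoint X) ∈ U n := by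
      intro n
      by_contra h
      exact hx (mem_iUnion.mpr ⟨n, h⟩)
    have : (x : OnePoint X) ∈ ⋂ n, U n := mem_iInter.mpr hxU
    rw [hinter] at this
    exact OnePoint.coe_ne_infty x this
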